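/- Let m_1, …, m_N be vectors in ℝ^n and let σ = {Σ_{i=1}^N t_i m_i : t_i ≥ 0 for all i} be the convex cone they generate. Then there exists a constant C > 0 such that every x ∈ σ can be written as x = Σ_{i=1}^N t_i m_i with 0 ≤ t_i ≤ C·‖x‖ for every i, where ‖·‖ is the Euclidean norm. -/

import Mathlib

/-- Coefficient bound for a linearly independent subfamily. -/
private lemma coeff_bound (n N : ℕ) (m : Fin N → EuclideanSpace ℝ (Fin n))
    (S : Finset (Fin N)) :
    ∃ C : ℝ, 0 < C ∧
      (LinearIndependent ℝ (fun i : S => m i) →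
        ∀ s : Fin N → ℝ, (∀ i, i ∉ S → s i = 0) →
          ∀ i, |s i| ≤ C * ‖∑ j, s j • m j‖) := by
  by_cases hli : LinearIndependent ℝ (fun i : S => m i)
  · set K := Submodule.span ℝ (Set.range fun i : S => m i) with hK
    let P : EuclideanSpace ℝ (Fin n) →L[ℝ] K := K.orthogonalProjectionOnto
    let L : S → (EuclideanSpace ℝ (Fin n) →ₗ[ℝ] ℝ) := fun i =>
      (Finsupp.lapply i) ∘ₗ hli.repr ∘ₗ (P : EuclideanSpace ℝ (Fin n) →ₗ[ℝ] K)
    let Lc : S → (EuclideanSpace ℝ (Fin n) →L[ℝ] ℝ) := fun i => (L i).toContinuousLinearMap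
    have hCpos : (0:ℝ) < 1 + ∑ i : S, ‖Lc i‖ := by positivity
    refine ⟨1 + ∑ i : S, ‖Lc i‖, hCpos, fun _ s hs i => ?_⟩
    set x := ∑ j, s j • m j with hx
    by_cases hiS : i ∈ S
    · have hxS : x = ∑ j ∈ S.attach, s j • m j := by
        rw [hx, Finset.sum_attach S (fun j => s j • m j)]
        refine (Finset.sum_subset (Finset.subset_univ S) ?_).symm
        intro j _ hj
        rw [hs j hj, zero_smul]
      have hxK : x ∈ K := by
        rw [hxS]
        exact Submodule.sum_mem _ fun j _ =>
          Submodule.smul_mem _ _ (Submodule.subset_span ⟨j, rfl⟩)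
      have hPx : P x = ⟨x, hxK⟩ := by
        apply Subtype.ext
        exact Submodule.starProjection_eq_self_iff.mpr hxK
      have hrepr : hli.repr ⟨x, hxK⟩ =
          (Finsupp.linearEquivFunOnFinite ℝ ℝ ↥S).symm (fun j : S => s j) := by
        apply hli.repr_eq
        rw [Finsupp.linearCombination_eq_fintype_linearCombination_apply,
          Fintype.linearCombination_apply]
        rw [Finset.univ_eq_attach]
        exact hxS.symm
      have hLx : Lc ⟨i, hiS⟩ x = s i := by
        show L ⟨i, hiS⟩ x = s i
        simp only [L, LinearMap.comp_apply, LinearMap.coe_coe, ContinuousLinearMap.coe_coe,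
          hPx, hrepr, Finsupp.lapply_apply]
        rfl
      calc |s i| = ‖Lc ⟨i, hiS⟩ x‖ := by rw [hLx]; simp [Real.norm_eq_abs]
        _ ≤ ‖Lc ⟨i, hiS⟩‖ * ‖x‖ := (Lc ⟨i, hiS⟩).le_opNorm x
        _ ≤ (1 + ∑ j : S, ‖Lc j‖) * ‖x‖ := by
            apply mul_le_mul_of_nonneg_right _ (norm_nonneg x)
            have h1 : ‖Lc ⟨i, hiS⟩‖ ≤ ∑ j : S, ‖Lc j‖ :=
              Finset.single_le_sum (fun j _ => norm_nonneg (Lc j)) (Finset.mem_univ _)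
            linarith
    · rw [hs i hiS, abs_zero]
      positivity
  · exact ⟨1, one_pos, fun h => absurd h hli⟩

/-- Carathéodory-type reduction: any nonnegative combination can be rewritten with
linearly independent support. -/
private lemma cone_caratheodory (n N : ℕ) (m : Fin N → EuclideanSpace ℝ (Fin n)) :
    ∀ k (t : Fin N → ℝ), (∀ i, 0 ≤ t i) →
      (Finset.univ.filter fun i => t i ≠ 0).card ≤ k →
      ∃ s : Fin N → ℝ, (∀ i, 0 ≤ s i) ∧ ∑ i, s i • m i = ∑ i, t i • m i ∧
        LinearIndependent ℝ
          (fun i : (Finset.univ.filter fun i => s i ≠ 0) => m i) := by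
  intro k
  induction k with
  | zero =>
    intro t ht hcard
    refine ⟨t, ht, rfl, ?_⟩
    have hemp : (Finset.univ.filter fun i => t i ≠ 0) = ∅ := Finset.card_eq_zero.mp
      (Nat.le_zero.mp hcard)
    haveI : IsEmpty ↥(Finset.univ.filter fun i => t i ≠ 0) :=
      Finset.isEmpty_coe_sort.mpr hemp
    exact linearIndependent_empty_type
  | succ k ih =>
    intro t ht hcard
    set T := Finset.univ.filter fun i => t i ≠ 0 with hT
    by_cases hli : LinearIndependent ℝ (fun i : T => m i)
    · exact ⟨t, ht, rfl, hli⟩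
    · obtain ⟨g, hg0, j0, hj0⟩ := Fintype.not_linearIndependent_iff.mp hli
      classical
      set c0 : Fin N → ℝ := fun i => if h : i ∈ T then g ⟨i, h⟩ else 0 with hc0
      have hc0sum : ∑ i, c0 i • m i = 0 := by
        have h1 : ∑ i, c0 i • m i = ∑ i ∈ T, c0 i • m i :=
          (Finset.sum_subset (Finset.subset_univ T)
            (fun i _ hi => by simp [hc0, hi])).symm
        rw [h1, ← Finset.sum_attach T (fun i => c0 i • m i)]
        rw [Finset.univ_eq_attach] at hg0
        rw [← hg0]
        exact Finset.sum_congr rfl fun i _ => by simp [hc0, i.2]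
      have hc0ne : ∃ i, c0 i ≠ 0 := ⟨j0, by simpa [hc0, j0.2] using hj0⟩
      set c : Fin N → ℝ := if ∃ i, 0 < c0 i then c0 else -c0 with hc
      have hcsum : ∑ i, c i • m i = 0 := by
        by_cases hex : ∃ i, 0 < c0 i
        · simpa [hc, if_pos hex] using hc0sum
        · simp only [hc, if_neg hex, Pi.neg_apply, neg_smul, Finset.sum_neg_distrib,
            hc0sum, neg_zero]
      have hcpos : ∃ i, 0 < c i := by
        by_cases hex : ∃ i, 0 < c0 i
        · simpa [hc, if_pos hex] using hex
        · obtain ⟨i, hi⟩ := hc0ne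
          refine ⟨i, ?_⟩
          simp only [hc, if_neg hex, Pi.neg_apply]
          push_neg at hex
          exact neg_pos.mpr (lt_of_le_of_ne (hex i) hi)
      have hczero : ∀ i, t i = 0 → c i = 0 := by
        intro i hti
        have hiT : i ∉ T := by simp [hT, hti]
        by_cases hex : ∃ i, 0 < c0 i
        · rw [hc, if_pos hex]; simp [hc0, hiT]
        · rw [hc, if_neg hex]; simp [hc0, hiT]
      set Q := Finset.univ.filter fun i => 0 < c i with hQ
      have hQne : Q.Nonempty := by
        obtain ⟨i, hi⟩ := hcpos
        exact ⟨i, by simp [hQ, hi]⟩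
      set lam := Q.inf' hQne fun i => t i / c i with hlam
      obtain ⟨i0, hi0Q, hi0⟩ := Finset.exists_mem_eq_inf' hQne fun i => t i / c i
      rw [← hlam] at hi0
      have hi0pos : 0 < c i0 := by simpa [hQ] using hi0Q
      have hlamnn : 0 ≤ lam := by
        rw [hlam]
        apply Finset.le_inf'
        intro i hi
        have : 0 < c i := by simpa [hQ] using hi
        exact div_nonneg (ht i) this.le
      set s : Fin N → ℝ := fun i => t i - lam * c i with hs
      have hsnn : ∀ i, 0 ≤ s i := by
        intro i
        rcases le_or_gt (c i) 0 with h | h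
        · have : lam * c i ≤ 0 := mul_nonpos_of_nonneg_of_nonpos hlamnn h
          simp only [hs]; linarith [ht i]
        · have hiQ : i ∈ Q := by simp [hQ, h]
          have h1 : lam ≤ t i / c i := Finset.inf'_le _ hiQ
          have h2 : lam * c i ≤ t i := (le_div_iff₀ h).mp h1
          simp only [hs]; linarith
      have hssum : ∑ i, s i • m i = ∑ i, t i • m i := by
        simp only [hs, sub_smul]
        rw [Finset.sum_sub_distrib]
        have h3 : ∑ i, (lam * c i) • m i = lam • ∑ i, c i • m i := by
          rw [Finset.smul_sum]
          exact Finset.sum_congr rfl fun i _ => by rw [smul_smul]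
        rw [h3, hcsum, smul_zero, sub_zero]
      have hssubset : (Finset.univ.filter fun i => s i ≠ 0) ⊆ T.erase i0 := by
        intro i hi
        simp only [Finset.mem_filter, Finset.mem_univ, true_and] at hi
        rw [Finset.mem_erase]
        constructor
        · rintro rfl
          refine hi ?_
          simp only [hs]
          rw [hi0, div_mul_cancel₀ _ (ne_of_gt hi0pos), sub_self]
        · simp only [hT, Finset.mem_filter, Finset.mem_univ, true_and]
          intro hti
          exact hi (by simp [hs, hti, hczero i hti])
      have hi0T : i0 ∈ T := by
        simp only [hT, Finset.mem_filter, Finset.mem_univ, true_and]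
        intro h
        exact absurd (hczero i0 h) (ne_of_gt hi0pos)
      have hcard' : (Finset.univ.filter fun i => s i ≠ 0).card ≤ k := by
        calc (Finset.univ.filter fun i => s i ≠ 0).card ≤ (T.erase i0).card :=
              Finset.card_le_card hssubset
          _ = T.card - 1 := Finset.card_erase_of_mem hi0T
          _ ≤ k := by omega
      obtain ⟨s', h1, h2, h3⟩ := ih s hsnn hcard'
      exact ⟨s', h1, h2.trans hssum, h3⟩

/-- For vectors `m 1, …, m N` in `ℝ^n`, there is a constant `C > 0` such that
every element `x` of the convex cone they generate can be written as a
nonnegative combination `x = ∑ i, t i • m i` with `t i ≤ C * ‖x‖` for all `i`. -/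
theorem bounded_coefficients_in_cone (n N : ℕ) (m : Fin N → EuclideanSpace ℝ (Fin n)) :
    ∃ C : ℝ, 0 < C ∧
      ∀ x ∈ {y : EuclideanSpace ℝ (Fin n) |
          ∃ t : Fin N → ℝ, (∀ i, 0 ≤ t i) ∧ y = ∑ i, t i • m i},
        ∃ t : Fin N → ℝ, (∀ i, 0 ≤ t i ∧ t i ≤ C * ‖x‖) ∧ x = ∑ i, t i • m i := by
  classical
  choose Cf hCfpos hCf using coeff_bound n N m
  set C := (Finset.univ : Finset (Finset (Fin N))).sup' ⟨∅, Finset.mem_univ _⟩ Cf with hC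
  have hCpos : 0 < C :=
    lt_of_lt_of_le (hCfpos ∅) (Finset.le_sup' Cf (Finset.mem_univ ∅))
  refine ⟨C, hCpos, ?_⟩
  rintro x ⟨t, ht, rfl⟩
  obtain ⟨s, hs0, hsum, hli⟩ := cone_caratheodory n N m N t ht
    (le_trans (Finset.card_filter_le _ _) (by simp))
  set S := (Finset.univ.filter fun i => s i ≠ 0) with hS
  have hbd := hCf S hli s (fun i hi => by
    by_contra h
    exact hi (by simp [hS, h]))
  refine ⟨s, fun i => ⟨hs0 i, ?_⟩, hsum.symm⟩
  have h1 := hbd i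
  rw [hsum] at h1
  calc s i ≤ |s i| := le_abs_self _
    _ ≤ Cf S * ‖∑ j, t j • m j‖ := h1
    _ ≤ C * ‖∑ j, t j • m j‖ := by
        apply mul_le_mul_of_nonneg_right _ (norm_nonneg _)
        exact Finset.le_sup' Cf (Finset.mem_univ S)
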